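/- Let n ≥ 2, let a : ℝ → ℝ be twice differentiable at a point x₁ ∈ (0, 1), let b(x') := ‖x'‖²/2 − 1 for x' ∈ ℝ^{n−1}, and define w(x₁, x') := a(x₁)·b(x') on (0,1) × ℝ^{n−1}. Then at every point (x₁, x') of the domain, the determinant of the Hessian matrix of w equals a''(x₁)·b(x')·a(x₁)^{n−1} − a'(x₁)²·‖x'‖²·a(x₁)^{n−2}. -/

import Mathlib

open Set Metric MeasureTheory

/-- The first coordinate `x₁` of `x ∈ ℝⁿ`. -/
noncomputable def coord0 {n : ℕ} (x : EuclideanSpace ℝ (Fin n)) : ℝ :=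
  ∑ i : Fin n, if (i : ℕ) = 0 then x i else 0

/-- The squared norm `‖x'‖²` of the remaining coordinates `x' = (x₂, …, xₙ)`. -/
noncomputable def sqTail {n : ℕ} (x : EuclideanSpace ℝ (Fin n)) : ℝ :=
  ∑ i : Fin n, if (i : ℕ) = 0 then 0 else x i ^ 2

/-- The determinant of the Hessian matrix of `w` at `x`. -/
noncomputable def hessDet {n : ℕ} (w : EuclideanSpace ℝ (Fin n) → ℝ)
    (x : EuclideanSpace ℝ (Fin n)) : ℝ :=
  (Matrix.of fun i j : Fin n =>
    fderiv ℝ (fun y => fderiv ℝ w y (EuclideanSpace.single i 1)) x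
      (EuclideanSpace.single j 1)).det

section Aux

open Matrix

/-- Determinant of an "arrowhead" matrix. -/
lemma arrow_det (m : ℕ) (α : ℝ) (r : Fin (m+2) → ℝ) (hr : r 0 = 0) (c : ℝ) :
    (Matrix.of fun i j : Fin (m+2) =>
      if i = 0 then (if j = 0 then α else r j)
      else if j = 0 then r i else if i = j then c else 0).det
    = α * c ^ (m+1) - (∑ j, r j ^ 2) * c ^ m := by
  have key : ∀ c : ℝ, c ≠ 0 →
      (Matrix.of fun i j : Fin (m+2) =>
        if i = 0 then (if j = 0 then α else r j)
        else if j = 0 then r i else if i = j then c else 0).det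
      = α * c ^ (m+1) - (∑ j, r j ^ 2) * c ^ m := by
    intro c hc
    set e : Fin 1 ⊕ Fin (m+1) ≃ Fin (m+2) :=
      finSumFinEquiv.trans (finCongr (by omega)) with he
    have h0 : e (Sum.inl 0) = 0 := rfl
    have hne : ∀ j : Fin (m+1), e (Sum.inr j) ≠ 0 := by
      intro j h
      have h2 : e (Sum.inr j) = e (Sum.inl 0) := by rw [h0, h]
      exact (by simp at h2 : False)
    set M := (Matrix.of fun i j : Fin (m+2) =>
        if i = 0 then (if j = 0 then α else r j)
        else if j = 0 then r i else if i = j then c else 0) with hM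
    set B := (Matrix.of fun (_ : Fin 1) (j : Fin (m+1)) => r (e (Sum.inr j))) with hB
    set C := (Matrix.of fun (i : Fin (m+1)) (_ : Fin 1) => r (e (Sum.inr i))) with hC
    have hsub : M.submatrix e e = fromBlocks
        (Matrix.of fun _ _ : Fin 1 => α) B C
        (c • (1 : Matrix (Fin (m+1)) (Fin (m+1)) ℝ)) := by
      ext i j
      cases i with
      | inl i =>
        cases j with
        | inl j => simp [Matrix.submatrix_apply, hM, Fin.eq_zero i, Fin.eq_zero j, h0]
        | inr j => simp [Matrix.submatrix_apply, hM, hB, Fin.eq_zero i, h0, hne j]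
      | inr i =>
        cases j with
        | inl j => simp [Matrix.submatrix_apply, hM, hC, Fin.eq_zero j, h0, hne i]
        | inr j =>
          simp only [Matrix.submatrix_apply, hM, Matrix.of_apply,
            fromBlocks_apply₂₂, Matrix.smul_apply, Matrix.one_apply, smul_eq_mul,
            if_neg (hne i), if_neg (hne j),
            EmbeddingLike.apply_eq_iff_eq, Sum.inr.injEq]
          by_cases h : i = j <;> simp [h]
    have hD : (c • (1 : Matrix (Fin (m+1)) (Fin (m+1)) ℝ)).det = c ^ (m+1) := by
      simp [Matrix.det_smul]
    have hinv : Invertible (c • (1 : Matrix (Fin (m+1)) (Fin (m+1)) ℝ)) :=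
      Matrix.invertibleOfIsUnitDet _ (by rw [hD]; exact (isUnit_iff_ne_zero.2 (pow_ne_zero _ hc)))
    have hinvD : ⅟(c • (1 : Matrix (Fin (m+1)) (Fin (m+1)) ℝ)) = c⁻¹ • 1 := by
      apply invOf_eq_right_inv
      rw [smul_mul_smul_comm, one_mul, mul_inv_cancel₀ hc, one_smul]
    have hdet := Matrix.det_fromBlocks₂₂
        (Matrix.of fun _ _ : Fin 1 => α) B C
        (c • (1 : Matrix (Fin (m+1)) (Fin (m+1)) ℝ))
    have hsum : ∑ j : Fin (m+1), r (e (Sum.inr j)) ^ 2 = ∑ j, r j ^ 2 := by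
      rw [← Equiv.sum_comp e (fun j => r j ^ 2), Fintype.sum_sum_type]
      simp [h0, hr]
    have hBC : (B * ⅟(c • (1 : Matrix (Fin (m+1)) (Fin (m+1)) ℝ)) * C) 0 0
        = c⁻¹ * ∑ j : Fin (m+1), r (e (Sum.inr j)) ^ 2 := by
      rw [hinvD, Matrix.mul_smul, Matrix.mul_one, Matrix.smul_mul, Matrix.smul_apply,
        Matrix.mul_apply]
      simp [hB, hC, sq]
    calc M.det = (M.submatrix e e).det := (Matrix.det_submatrix_equiv_self e M).symm
      _ = α * c ^ (m+1) - (∑ j, r j ^ 2) * c ^ m := by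
          rw [hsub, hdet, hD, Matrix.det_fin_one, Matrix.sub_apply, hBC, hsum,
            Matrix.of_apply, pow_succ]
          field_simp
  rcases eq_or_ne c 0 with rfl | hc
  · have hf : Continuous fun c : ℝ => (Matrix.of fun i j : Fin (m+2) =>
        if i = 0 then (if j = 0 then α else r j)
        else if j = 0 then r i else if i = j then c else 0).det := by
      apply Continuous.matrix_det
      apply continuous_matrix
      intro i j
      simp only [Matrix.of_apply]
      split_ifs <;> first | exact continuous_const | exact continuous_id
    have hg : Continuous fun c : ℝ => α * c ^ (m+1) - (∑ j, r j ^ 2) * c ^ m := by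
      fun_prop
    have := Continuous.ext_on (dense_compl_singleton (0:ℝ)) hf hg
      (fun c hc => key c hc)
    exact congrFun this 0
  · exact key c hc

variable {m : ℕ}

lemma proj_hasFDerivAt (i : Fin (m+2)) (y : EuclideanSpace ℝ (Fin (m+2))) :
    HasFDerivAt (fun z : EuclideanSpace ℝ (Fin (m+2)) => z i)
      (EuclideanSpace.proj (𝕜 := ℝ) i) y :=
  (EuclideanSpace.proj (𝕜 := ℝ) i).hasFDerivAt

lemma hasFDerivAt_sqTail (y : EuclideanSpace ℝ (Fin (m+2))) :
    HasFDerivAt (sqTail (n := m+2))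
      (∑ i : Fin (m+2), if (i : ℕ) = 0 then (0 : EuclideanSpace ℝ (Fin (m+2)) →L[ℝ] ℝ)
        else (2 * y i) • EuclideanSpace.proj i) y := by
  apply HasFDerivAt.fun_sum
  intro i _
  by_cases h : (i : ℕ) = 0
  · simpa [h] using (hasFDerivAt_const (0:ℝ) y)
  · simp only [h, if_false]
    have h2 := (proj_hasFDerivAt i y).mul (proj_hasFDerivAt i y)
    have e : ((2 * y i) • EuclideanSpace.proj i : EuclideanSpace ℝ (Fin (m+2)) →L[ℝ] ℝ)
        = y i • EuclideanSpace.proj i + y i • EuclideanSpace.proj i := by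
      ext v; simp; ring
    refine (h2.congr_of_eventuallyEq (Filter.Eventually.of_forall fun z => ?_)).congr_fderiv e.symm
    simp [h, sq]

lemma hasFDerivAt_mulb (c c' : ℝ → ℝ) (y : EuclideanSpace ℝ (Fin (m+2)))
    (hc : HasDerivAt c (c' (y 0)) (y 0)) :
    HasFDerivAt (fun z : EuclideanSpace ℝ (Fin (m+2)) => c (z 0) * (sqTail z / 2 - 1))
      (c (y 0) • ((2:ℝ)⁻¹ • ∑ i : Fin (m+2), if (i : ℕ) = 0 then (0 : EuclideanSpace ℝ (Fin (m+2)) →L[ℝ] ℝ)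
          else (2 * y i) • EuclideanSpace.proj i)
        + (sqTail y / 2 - 1) • (c' (y 0) • EuclideanSpace.proj 0)) y := by
  have h1 : HasFDerivAt (fun z : EuclideanSpace ℝ (Fin (m+2)) => c (z 0))
      (c' (y 0) • EuclideanSpace.proj (𝕜 := ℝ) 0) y :=
    hc.comp_hasFDerivAt y (proj_hasFDerivAt 0 y)
  have h2 : HasFDerivAt (fun z : EuclideanSpace ℝ (Fin (m+2)) => sqTail z / 2 - 1)
      ((2:ℝ)⁻¹ • ∑ i : Fin (m+2), if (i : ℕ) = 0 then (0 : EuclideanSpace ℝ (Fin (m+2)) →L[ℝ] ℝ)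
          else (2 * y i) • EuclideanSpace.proj i) y := by
    have h3 := ((hasFDerivAt_sqTail y).const_smul ((2:ℝ)⁻¹)).sub_const 1
    refine h3.congr_of_eventuallyEq (Filter.Eventually.of_forall fun z => ?_)
    simp only [Pi.smul_apply, smul_eq_mul]
    ring
  exact h1.mul h2

lemma fderiv_mulb_apply (c c' : ℝ → ℝ) (y : EuclideanSpace ℝ (Fin (m+2)))
    (hc : HasDerivAt c (c' (y 0)) (y 0)) (j : Fin (m+2)) :
    fderiv ℝ (fun z : EuclideanSpace ℝ (Fin (m+2)) => c (z 0) * (sqTail z / 2 - 1)) y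
      (EuclideanSpace.single j 1)
    = if j = 0 then c' (y 0) * (sqTail y / 2 - 1) else c (y 0) * y j := by
  rw [(hasFDerivAt_mulb c c' y hc).fderiv]
  simp only [ContinuousLinearMap.add_apply, ContinuousLinearMap.smul_apply,
    ContinuousLinearMap.sum_apply]
  have hQ : ∑ i : Fin (m+2), ((if (i : ℕ) = 0 then (0 : EuclideanSpace ℝ (Fin (m+2)) →L[ℝ] ℝ)
      else (2 * y i) • EuclideanSpace.proj i) (EuclideanSpace.single j 1))
      = if (j : ℕ) = 0 then 0 else 2 * y j := by
    rw [Finset.sum_eq_single j]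
    · by_cases h : (j : ℕ) = 0 <;> simp [h, EuclideanSpace.single_apply]
    · intro i _ hij
      by_cases h : (i : ℕ) = 0 <;> simp [h, EuclideanSpace.single_apply, hij]
    · simp
  rw [hQ]
  have hp0 : (EuclideanSpace.proj (𝕜 := ℝ) (0 : Fin (m+2))) (EuclideanSpace.single j 1)
      = if j = 0 then 1 else 0 := by
    simp [EuclideanSpace.single_apply, eq_comm]
  rw [hp0]
  by_cases h : j = 0
  · have h' : (j : ℕ) = 0 := by simp [h]
    simp [h, h']
    try ring
  · have h' : ¬ (j : ℕ) = 0 := fun h'' => h (Fin.ext (by simp [h'']))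
    simp [h, h']
    try ring

lemma fderiv_mulcoord_apply (c c' : ℝ → ℝ) (y : EuclideanSpace ℝ (Fin (m+2)))
    (hc : HasDerivAt c (c' (y 0)) (y 0)) (i : Fin (m+2)) (hi : i ≠ 0) (j : Fin (m+2)) :
    fderiv ℝ (fun z : EuclideanSpace ℝ (Fin (m+2)) => c (z 0) * z i) y
      (EuclideanSpace.single j 1)
    = if j = 0 then c' (y 0) * y i else if i = j then c (y 0) else 0 := by
  have h1 : HasFDerivAt (fun z : EuclideanSpace ℝ (Fin (m+2)) => c (z 0))
      (c' (y 0) • EuclideanSpace.proj (𝕜 := ℝ) 0) y :=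
    hc.comp_hasFDerivAt y (proj_hasFDerivAt 0 y)
  rw [(h1.fun_mul (proj_hasFDerivAt i y)).fderiv]
  simp only [ContinuousLinearMap.add_apply, ContinuousLinearMap.smul_apply]
  have hpi : (EuclideanSpace.proj (𝕜 := ℝ) i) (EuclideanSpace.single j 1)
      = if i = j then 1 else 0 := by simp [EuclideanSpace.single_apply]
  have hp0 : (EuclideanSpace.proj (𝕜 := ℝ) (0 : Fin (m+2))) (EuclideanSpace.single j 1)
      = if j = 0 then 1 else 0 := by
    simp [EuclideanSpace.single_apply, eq_comm]
  rw [hpi, hp0]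
  by_cases h : j = 0 <;> by_cases h2 : i = j
  · exact absurd (h2.trans h) hi
  · simp [h, h2, hi]
    try ring
  · simp [h, h2]
    try ring
  · simp [h, h2]
    try ring

lemma coord0_eq (y : EuclideanSpace ℝ (Fin (m+2))) : coord0 y = y 0 := by
  have h : ∀ i : Fin (m+2), ((i:ℕ) = 0) = (i = 0) := fun i => propext ⟨fun h => Fin.ext (by simp [h]), fun h => by simp [h]⟩
  simp only [coord0, h]
  simp

end Aux

/-- For `w(x₁, x') = a(x₁)·b(x')` with `b(x') = ‖x'‖²/2 - 1` and `a` twice differentiable,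
the Hessian determinant is
`a''(x₁)·b(x')·a(x₁)^{n-1} - a'(x₁)²·‖x'‖²·a(x₁)^{n-2}`. -/
theorem hessDet_product_formula (n : ℕ) (hn : 2 ≤ n) (a a' a'' : ℝ → ℝ)
    (ha' : ∀ t ∈ Ioo (0 : ℝ) 1, HasDerivAt a (a' t) t)
    (ha'' : ∀ t ∈ Ioo (0 : ℝ) 1, HasDerivAt a' (a'' t) t) :
    ∀ x : EuclideanSpace ℝ (Fin n), coord0 x ∈ Ioo (0 : ℝ) 1 →
      hessDet (fun y => a (coord0 y) * (sqTail y / 2 - 1)) x =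
        a'' (coord0 x) * (sqTail x / 2 - 1) * a (coord0 x) ^ (n - 1) -
          a' (coord0 x) ^ 2 * sqTail x * a (coord0 x) ^ (n - 2) := by
  obtain ⟨m, rfl⟩ : ∃ m, n = m + 2 := ⟨n - 2, by omega⟩
  intro x hx
  have hx0 : x 0 ∈ Ioo (0:ℝ) 1 := by rwa [coord0_eq] at hx
  have hw : (fun y : EuclideanSpace ℝ (Fin (m+2)) => a (coord0 y) * (sqTail y / 2 - 1))
      = fun y => a (y 0) * (sqTail y / 2 - 1) := by
    funext y; rw [coord0_eq]
  rw [hw]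
  -- the open set where the explicit first derivative formula holds
  have hU : IsOpen {y : EuclideanSpace ℝ (Fin (m+2)) | y 0 ∈ Ioo (0:ℝ) 1} := by
    have hcont : Continuous fun y : EuclideanSpace ℝ (Fin (m+2)) => y 0 :=
      (EuclideanSpace.proj (𝕜 := ℝ) (0 : Fin (m+2))).continuous
    exact isOpen_Ioo.preimage hcont
  set F : Fin (m+2) → EuclideanSpace ℝ (Fin (m+2)) → ℝ := fun i y =>
    if i = 0 then a' (y 0) * (sqTail y / 2 - 1) else a (y 0) * y i with hF
  have heq : ∀ i : Fin (m+2),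
      (fun y => fderiv ℝ (fun z => a (z 0) * (sqTail z / 2 - 1)) y
        (EuclideanSpace.single i 1)) =ᶠ[nhds x] F i := by
    intro i
    apply Filter.eventuallyEq_of_mem (hU.mem_nhds hx0)
    intro y hy
    exact fderiv_mulb_apply a a' y (ha' (y 0) hy) i
  have hentry : ∀ i j : Fin (m+2),
      fderiv ℝ (fun y => fderiv ℝ (fun z => a (z 0) * (sqTail z / 2 - 1)) y
        (EuclideanSpace.single i 1)) x (EuclideanSpace.single j 1)
      = if i = 0 then
          (if j = 0 then a'' (x 0) * (sqTail x / 2 - 1)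
            else (if j = 0 then 0 else a' (x 0) * x j))
        else if j = 0 then (if i = 0 then 0 else a' (x 0) * x i)
        else if i = j then a (x 0) else 0 := by
    intro i j
    rw [(heq i).fderiv_eq]
    by_cases hi : i = 0
    · have hFi : F i = fun y => a' (y 0) * (sqTail y / 2 - 1) := by
        funext y; simp [hF, hi]
      rw [hFi, fderiv_mulb_apply a' a'' x (ha'' (x 0) hx0) j]
      by_cases hj : j = 0 <;> simp [hi, hj]
    · have hFi : F i = fun y => a (y 0) * y i := by
        funext y; simp [hF, hi]
      rw [hFi, fderiv_mulcoord_apply a a' x (ha' (x 0) hx0) i hi j]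
      by_cases hj : j = 0 <;> simp [hi, hj]
  have hmat : (Matrix.of fun i j : Fin (m+2) =>
      fderiv ℝ (fun y => fderiv ℝ (fun z => a (z 0) * (sqTail z / 2 - 1)) y
        (EuclideanSpace.single i 1)) x (EuclideanSpace.single j 1))
      = Matrix.of fun i j : Fin (m+2) =>
        if i = 0 then (if j = 0 then a'' (x 0) * (sqTail x / 2 - 1)
          else (if j = 0 then (0:ℝ) else a' (x 0) * x j))
        else if j = 0 then (if i = 0 then 0 else a' (x 0) * x i)
        else if i = j then a (x 0) else 0 := by
    ext i j
    exact hentry i j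
  have hr0 : (if (0 : Fin (m+2)) = 0 then (0:ℝ) else a' (x 0) * x 0) = 0 := by simp
  rw [hessDet, hmat, arrow_det m (a'' (x 0) * (sqTail x / 2 - 1))
    (fun j => if j = 0 then 0 else a' (x 0) * x j) hr0 (a (x 0))]
  have hsum : ∑ j : Fin (m+2), (if j = 0 then (0:ℝ) else a' (x 0) * x j) ^ 2
      = a' (x 0) ^ 2 * sqTail x := by
    rw [sqTail, Finset.mul_sum]
    apply Finset.sum_congr rfl
    intro j _
    by_cases h : j = 0
    · have h' : (j : ℕ) = 0 := by simp [h]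
      simp [h, h']
    · have h' : ¬ (j : ℕ) = 0 := fun h'' => h (Fin.ext (by simp [h'']))
      simp [h, h']
      ring
  rw [hsum, coord0_eq]
  norm_num
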